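/- Let q and p be probability density functions on a measurable space. If the variance under q of log(q(z)/p(z)) is zero and q, p have the same support, then log(q/p) is q-a.e. constant, and since both densities integrate to 1, q = p almost everywhere. Conversely, if q = p a.e. then the variance is zero. Hence the log-variance loss L_q(q||p) = ½ Var_q(log(q/p)) vanishes if and only if q = p a.e. -/
import Mathlib


open MeasureTheory

/-- The log-variance loss `L_q(q‖p) = ½ Var_q(log(q/p))` vanishes iff `q = p` a.e.
Here `q, p` are probability densities w.r.t. a σ-finite measure `μ`, with the same
support (a.e.), and the variance under `q` is written via density-weighted integrals. -/
theorem log_variance_loss_eq_zero_iff {α : Type*} [MeasurableSpace α]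
    (μ : Measure α) [SigmaFinite μ] (q p : α → ℝ)
    (hqm : Measurable q) (hpm : Measurable p)
    (hq0 : ∀ᵐ z ∂μ, 0 ≤ q z) (hp0 : ∀ᵐ z ∂μ, 0 ≤ p z)
    (hq1 : ∫ z, q z ∂μ = 1) (hp1 : ∫ z, p z ∂μ = 1)
    (hsupp : ∀ᵐ z ∂μ, (q z ≠ 0 ↔ p z ≠ 0))
    (hint1 : Integrable (fun z => q z * Real.log (q z / p z)) μ)
    (hint2 : Integrable (fun z => q z * (Real.log (q z / p z)) ^ 2) μ) :
    (1 / 2) * ((∫ z, q z * (Real.log (q z / p z)) ^ 2 ∂μ)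
        - (∫ z, q z * Real.log (q z / p z) ∂μ) ^ 2) = 0 ↔ q =ᵐ[μ] p := by
  set f : α → ℝ := fun z => Real.log (q z / p z) with hf
  have hq_int : Integrable q μ := by
    by_contra h
    rw [integral_undef h] at hq1; norm_num at hq1
  set m : ℝ := ∫ z, q z * f z ∂μ with hm
  constructor
  · intro h
    have hvar : (∫ z, q z * (f z) ^ 2 ∂μ) - m ^ 2 = 0 := by linarith
    have hrw : (fun z => q z * (f z - m) ^ 2)
        = fun z => (q z * (f z) ^ 2 - (2 * m) * (q z * f z)) + m ^ 2 * q z := by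
      funext z; ring
    have hg_int : Integrable (fun z => q z * (f z - m) ^ 2) μ := by
      rw [hrw]
      exact (hint2.sub (hint1.const_mul _)).add (hq_int.const_mul _)
    have hg_nonneg : 0 ≤ᵐ[μ] fun z => q z * (f z - m) ^ 2 :=
      hq0.mono fun z hz => mul_nonneg hz (sq_nonneg _)
    have hg_val : ∫ z, q z * (f z - m) ^ 2 ∂μ = 0 := by
      have e1 : Integrable (fun z => q z * (f z) ^ 2 - 2 * m * (q z * f z)) μ :=
        hint2.sub (hint1.const_mul _)
      rw [hrw, integral_add e1 (hq_int.const_mul _),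
        integral_sub hint2 (hint1.const_mul _), integral_const_mul, integral_const_mul,
        hq1, ← hm]
      nlinarith [hvar]
    have hae : ∀ᵐ z ∂μ, q z * (f z - m) ^ 2 = 0 :=
      (integral_eq_zero_iff_of_nonneg_ae hg_nonneg hg_int).mp hg_val
    have key : ∀ᵐ z ∂μ, q z = Real.exp m * p z := by
      filter_upwards [hae, hsupp, hq0, hp0] with z hz hs hq0z hp0z
      rcases eq_or_ne (q z) 0 with h0 | h0
      · have hp0' : p z = 0 := by
          by_contra hp; exact (hs.mpr hp) h0
        rw [h0, hp0']; ring
      · rcases mul_eq_zero.mp hz with h1 | h2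
        · exact absurd h1 h0
        · have hfz : f z = m := by nlinarith [sq_nonneg (f z - m)]
          have hpz : 0 < p z := lt_of_le_of_ne hp0z (Ne.symm (hs.mp h0))
          have hqz : 0 < q z := lt_of_le_of_ne hq0z (Ne.symm h0)
          have hdiv : q z / p z = Real.exp m := by
            rw [← hfz, hf]
            exact (Real.exp_log (div_pos hqz hpz)).symm
          field_simp at hdiv
          linarith [hdiv]
    have hexp : Real.exp m = 1 := by
      have : (1 : ℝ) = Real.exp m * 1 := by
        calc (1 : ℝ) = ∫ z, q z ∂μ := hq1.symm
          _ = ∫ z, Real.exp m * p z ∂μ := integral_congr_ae key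
          _ = Real.exp m * ∫ z, p z ∂μ := integral_const_mul _ _
          _ = Real.exp m * 1 := by rw [hp1]
      linarith
    have hm0 : m = 0 := by
      have := congrArg Real.log hexp
      rwa [Real.log_exp, Real.log_one] at this
    filter_upwards [key] with z hz
    rw [hz, hm0, Real.exp_zero, one_mul]
  · intro hqp
    have h1 : (fun z => q z * f z) =ᵐ[μ] 0 := by
      filter_upwards [hqp] with z hz
      rcases eq_or_ne (q z) 0 with h | h
      · simp [h]
      · simp [hf, ← hz, div_self h]
    have h2 : (fun z => q z * (f z) ^ 2) =ᵐ[μ] 0 := by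
      filter_upwards [hqp] with z hz
      rcases eq_or_ne (q z) 0 with h | h
      · simp [h]
      · simp [hf, ← hz, div_self h]
    have e1 : m = 0 := by rw [hm]; exact integral_eq_zero_of_ae h1
    have e2 : (∫ z, q z * (Real.log (q z / p z)) ^ 2 ∂μ) = 0 := integral_eq_zero_of_ae h2
    rw [e1, e2]
    norm_num
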